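/- Under these assumptions, the Tate cohomology group H^{-1}(G, X) vanishes; explicitly, every element x ∈ X satisfying ∑_{σ∈G} σx = 0 lies in the subgroup of X generated by the elements σy − y with σ ∈ G and y ∈ X. -/

import Mathlib

set_option linter.unusedSectionVars false
set_option synthInstance.maxHeartbeats 1000000
set_option maxHeartbeats 1000000

/-!
STATEMENT 7: Let `L/K` be a Galois extension of number fields with group `G`, `S` a finite
set of places of `K` containing the archimedean and ramified places, with a fixed choice of
a place `p(L)` of `L` above each `p ∈ S`, such that some finite `p0 ∈ S` has decomposition
group all of `G`.  Then the Tate cohomology group `H⁻¹(G, X)` vanishes: every `x ∈ X` with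
`∑_{σ ∈ G} σ • x = 0` lies in the subgroup generated by the elements `σ • y − y` (`σ ∈ G`,
`y ∈ X`).

Here `Y` is the free abelian group on the set `S_L` of places of `L` above `S`, and `X` is
the kernel of the augmentation map `Y → ℤ`.
-/
namespace TateNF

open NumberField IsDedekindDomain

variable (K L : Type) [Field K] [Field L] [NumberField K] [NumberField L]
  [Algebra K L] [IsGalois K L] [FiniteDimensional K L]

/-- The ring homomorphism `𝓞 L → 𝓞 L` obtained by restricting `σ : L ≃ₐ[K] L` to the
ring of integers. -/
noncomputable def galRes (σ : L ≃ₐ[K] L) : (𝓞 L) →+* (𝓞 L) :=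
  ((galRestrict (𝓞 K) K L (𝓞 L) σ).toAlgHom : (𝓞 L) →+* (𝓞 L))

lemma galRes_apply (σ : L ≃ₐ[K] L) (x : 𝓞 L) :
    galRes K L σ x = galRestrict (𝓞 K) K L (𝓞 L) σ x := rfl

lemma galRes_comp (σ τ : L ≃ₐ[K] L) :
    (galRes K L σ).comp (galRes K L τ) = galRes K L (σ * τ) := by
  ext x
  simp [galRes_apply, map_mul, AlgEquiv.mul_apply]

lemma galRes_one : galRes K L 1 = RingHom.id (𝓞 L) := by
  ext x
  simp [galRes_apply, map_one]

/-- The natural action of the Galois group on the finite places of `L`: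
`σ` sends a prime `P` of `𝓞 L` to its image `σ(P)` (the preimage of `P` under `σ⁻¹`). -/
noncomputable instance : MulAction (L ≃ₐ[K] L) (HeightOneSpectrum (𝓞 L)) where
  smul σ v :=
    { asIdeal := Ideal.comap (galRes K L σ⁻¹) v.asIdeal
      isPrime := Ideal.comap_isPrime _ _
      ne_bot := fun h => v.ne_bot <| by
        have hsurj : Function.Surjective (galRes K L σ⁻¹) :=
          (galRestrict (𝓞 K) K L (𝓞 L) σ⁻¹).surjective
        rw [← Ideal.map_comap_of_surjective _ hsurj v.asIdeal, h, Ideal.map_bot] }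
  one_smul v := by
    ext x
    show x ∈ Ideal.comap (galRes K L 1⁻¹) v.asIdeal ↔ _
    rw [inv_one, galRes_one]
    simp
  mul_smul σ τ v := by
    ext x
    show x ∈ Ideal.comap (galRes K L (σ * τ)⁻¹) v.asIdeal ↔
      x ∈ Ideal.comap (galRes K L σ⁻¹) (Ideal.comap (galRes K L τ⁻¹) v.asIdeal)
    rw [Ideal.comap_comap, galRes_comp, mul_inv_rev]

lemma smul_asIdeal (σ : L ≃ₐ[K] L) (v : HeightOneSpectrum (𝓞 L)) :
    (σ • v).asIdeal = Ideal.comap (galRes K L σ⁻¹) v.asIdeal := rfl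

/-- The Galois action on finite places of `L` commutes with restriction to `K`. -/
lemma comap_algebraMap_smul (σ : L ≃ₐ[K] L) (v : HeightOneSpectrum (𝓞 L)) :
    ((σ • v).asIdeal).comap (algebraMap (𝓞 K) (𝓞 L)) =
      v.asIdeal.comap (algebraMap (𝓞 K) (𝓞 L)) := by
  rw [smul_asIdeal, Ideal.comap_comap]
  congr 1
  ext x
  simp [galRes_apply]

/-- A place of a number field `F`: either an infinite place or a finite place
(a nonzero prime of the ring of integers). -/
abbrev PlaceOf (F : Type) [Field F] [NumberField F] : Type :=
  NumberField.InfinitePlace F ⊕ HeightOneSpectrum (𝓞 F)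

/-- `LiesAbove P p` means that the place `P` of `L` lies above the place `p` of `K`. -/
def LiesAbove : PlaceOf L → PlaceOf K → Prop
  | .inl w, .inl u => w.comap (algebraMap K L) = u
  | .inr P, .inr p => P.asIdeal.comap (algebraMap (𝓞 K) (𝓞 L)) = p.asIdeal
  | _, _ => False

/-- The natural action of the Galois group on the places of `L`. -/
noncomputable instance : MulAction (L ≃ₐ[K] L) (PlaceOf L) where
  smul σ := Sum.map (fun w => σ • w) (fun v => σ • v)
  one_smul := by
    rintro (w | v)
    · show Sum.inl ((1 : L ≃ₐ[K] L) • w) = Sum.inl w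
      rw [one_smul]
    · show Sum.inr ((1 : L ≃ₐ[K] L) • v) = Sum.inr v
      rw [one_smul]
  mul_smul σ τ := by
    rintro (w | v)
    · show Sum.inl ((σ * τ) • w) = Sum.inl (σ • τ • w)
      rw [mul_smul]
    · show Sum.inr ((σ * τ) • v) = Sum.inr (σ • τ • v)
      rw [mul_smul]

lemma smul_inl (σ : L ≃ₐ[K] L) (w : NumberField.InfinitePlace L) :
    σ • (Sum.inl w : PlaceOf L) = Sum.inl (σ • w) := rfl

lemma smul_inr (σ : L ≃ₐ[K] L) (v : HeightOneSpectrum (𝓞 L)) :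
    σ • (Sum.inr v : PlaceOf L) = Sum.inr (σ • v) := rfl

lemma liesAbove_smul (σ : L ≃ₐ[K] L) (P : PlaceOf L) (p : PlaceOf K)
    (h : LiesAbove K L P p) : LiesAbove K L (σ • P) p := by
  obtain w | v := P <;> obtain u | q := p
  · rw [smul_inl]
    show (σ • w).comap (algebraMap K L) = u
    rw [NumberField.InfinitePlace.comap_smul,
      show (RingHom.comp (↑σ.symm) (algebraMap K L)) = algebraMap K L from
        RingHom.ext fun x => σ.symm.commutes x]
    exact h
  · exact (h : False).elim
  · exact (h : False).elim
  · rw [smul_inr]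
    show ((σ • v).asIdeal).comap (algebraMap (𝓞 K) (𝓞 L)) = q.asIdeal
    rw [comap_algebraMap_smul]
    exact h

variable (S : Finset (PlaceOf K))

/-- The set `S_L` of places of `L` lying above the places in `S`. -/
def SL : Set (PlaceOf L) := {P | ∃ p ∈ S, LiesAbove K L P p}

/-- The Galois action on `S_L`. -/
noncomputable instance : MulAction (L ≃ₐ[K] L) ↥(SL K L S) where
  smul σ P := ⟨σ • (P : PlaceOf L), by
    obtain ⟨p, hp, h⟩ := P.2
    exact ⟨p, hp, liesAbove_smul K L σ _ _ h⟩⟩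
  one_smul P := Subtype.ext (one_smul _ (P : PlaceOf L))
  mul_smul σ τ P := Subtype.ext (mul_smul σ τ (P : PlaceOf L))

/-- The decomposition group of a place `P ∈ S_L`: the stabilizer of `P` under the Galois
action on the places of `L`. -/
noncomputable def DecompGrp (P : ↥(SL K L S)) : Subgroup (L ≃ₐ[K] L) :=
  MulAction.stabilizer (L ≃ₐ[K] L) (P : PlaceOf L)

attribute [local instance] Finsupp.comapSMul Finsupp.comapMulAction Finsupp.comapDistribMulAction

/-- `Y`: the free abelian group on `S_L`, with the Galois group permuting the basis. -/
abbrev Y : Type := ↥(SL K L S) →₀ ℤ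

/-- The augmentation map `Y → ℤ`, sending every place in `S_L` to `1`. -/
noncomputable def augY : Y K L S →+ ℤ :=
  Finsupp.liftAddHom fun _ => AddMonoidHom.id ℤ

lemma augY_smul (σ : L ≃ₐ[K] L) (f : Y K L S) : augY K L S (σ • f) = augY K L S f := by
  show augY K L S (Finsupp.mapDomain (fun P => σ • P) f) = _
  simp only [augY, Finsupp.liftAddHom_apply]
  exact Finsupp.sum_mapDomain_index (fun _ => rfl) (fun _ _ _ => rfl)

/-- `X`: the kernel of the augmentation map `Y → ℤ`, as a subgroup of `Y`. -/
noncomputable def Xsub : AddSubgroup (Y K L S) := (augY K L S).ker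

lemma mem_Xsub (f : Y K L S) : f ∈ Xsub K L S ↔ augY K L S f = 0 := Iff.rfl

/-- The Galois action on `X`. -/
noncomputable instance : DistribMulAction (L ≃ₐ[K] L) ↥(Xsub K L S) where
  smul σ x := ⟨σ • (x : Y K L S), by
    rw [mem_Xsub, augY_smul]
    exact (mem_Xsub K L S _).mp x.2⟩
  one_smul x := Subtype.ext (one_smul _ (x : Y K L S))
  mul_smul σ τ x := Subtype.ext (mul_smul σ τ (x : Y K L S))
  smul_zero σ := Subtype.ext (smul_zero (A := Y K L S) σ)
  smul_add σ x y := Subtype.ext (smul_add σ (x : Y K L S) (y : Y K L S))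

/-- The element `P - P'` of `X`, for places `P, P' ∈ S_L`. -/
noncomputable def Xgen (P P' : ↥(SL K L S)) : ↥(Xsub K L S) :=
  ⟨Finsupp.single P 1 - Finsupp.single P' 1, by
    rw [mem_Xsub, map_sub]
    simp [augY]⟩

end TateNF

attribute [local instance] Finsupp.comapSMul Finsupp.comapMulAction Finsupp.comapDistribMulAction

/-- Key combinatorial lemma: if `f : α →₀ ℤ` has all "twisted sums" `∑ σ, f (σ • a)` equal to
zero, then `f` lies in the subgroup generated by elements `single (σ • a) 1 - single a 1`. -/
lemma key_finsupp_lemma {G α : Type*} [Group G] [Fintype G] [MulAction G α]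
    (f : α →₀ ℤ) (h : ∀ a : α, ∑ σ : G, f (σ • a) = 0) :
    f ∈ AddSubgroup.closure
      {z : α →₀ ℤ | ∃ (σ : G) (a : α), z = Finsupp.single (σ • a) 1 - Finsupp.single a 1} := by
  classical
  suffices H : ∀ (n : ℕ) (f : α →₀ ℤ), (∀ a : α, ∑ σ : G, f (σ • a) = 0) →
      f.support.card = n → f ∈ AddSubgroup.closure
      {z : α →₀ ℤ | ∃ (σ : G) (a : α), z = Finsupp.single (σ • a) 1 - Finsupp.single a 1} by
    exact H f.support.card f h rfl
  clear h f
  intro n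
  induction n using Nat.strong_induction_on with
  | _ n ih =>
    intro f h hn
    rcases eq_or_ne f 0 with rfl | hf
    · exact zero_mem _
    obtain ⟨a, ha⟩ := Finsupp.support_nonempty_iff.mpr hf
    have hfa : f a ≠ 0 := Finsupp.mem_support_iff.mp ha
    by_cases hb : ∃ σ : G, σ • a ≠ a ∧ f (σ • a) ≠ 0
    · obtain ⟨σ₀, hne, hfb⟩ := hb
      set b := σ₀ • a with hbdef
      -- the correction term
      set g : α →₀ ℤ := f - f b • (Finsupp.single b 1 - Finsupp.single a 1) with hgdef
      have hgapp : ∀ c : α, g c =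
          f c - f b * ((Finsupp.single b (1:ℤ)) c - (Finsupp.single a (1:ℤ)) c) := by
        intro c
        simp [hgdef, Finsupp.sub_apply, Finsupp.smul_apply, smul_eq_mul]
      -- twisted sums of the two singles agree
      have hba : ∀ c : α, ∑ σ : G, (Finsupp.single b (1:ℤ)) (σ • c)
          = ∑ σ : G, (Finsupp.single a (1:ℤ)) (σ • c) := by
        intro c
        refine (Fintype.sum_equiv (Equiv.mulLeft σ₀)
          (fun σ => (Finsupp.single a (1:ℤ)) (σ • c))
          (fun σ => (Finsupp.single b (1:ℤ)) (σ • c)) fun σ => ?_).symm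
        show (Finsupp.single a (1:ℤ)) (σ • c) = (Finsupp.single b (1:ℤ)) ((σ₀ * σ) • c)
        rw [mul_smul, hbdef, Finsupp.single_apply, Finsupp.single_apply]
        by_cases hc : a = σ • c
        · rw [if_pos hc, if_pos (by rw [hc])]
        · rw [if_neg hc, if_neg fun hEq => hc (smul_left_cancel σ₀ hEq)]
      -- g satisfies the hypothesis
      have hg : ∀ c : α, ∑ σ : G, g (σ • c) = 0 := by
        intro c
        rw [Finset.sum_congr rfl fun σ _ => hgapp (σ • c)]
        rw [Finset.sum_sub_distrib, h c, ← Finset.mul_sum, Finset.sum_sub_distrib,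
          hba c, sub_self, mul_zero, sub_zero]
      have hane : a ≠ b := fun hEq => hne hEq.symm
      have hgb : g b = 0 := by
        rw [hgapp b, Finsupp.single_eq_same, Finsupp.single_eq_of_ne' hane]
        ring
      have hsupp : g.support ⊆ f.support.erase b := by
        intro c hc
        have hgc : g c ≠ 0 := Finsupp.mem_support_iff.mp hc
        rw [Finset.mem_erase]
        refine ⟨fun hcb => hgc (hcb ▸ hgb), ?_⟩
        by_cases hca : c = a
        · exact hca ▸ ha
        · rw [Finsupp.mem_support_iff]
          intro hfc
          apply hgc
          rw [hgapp c, hfc, Finsupp.single_eq_of_ne' (fun hEq => hgc (by rw [← hEq]; exact hgb)),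
            Finsupp.single_eq_of_ne' (fun hEq => hca hEq.symm)]
          ring
      have hcard : g.support.card < n := by
        calc g.support.card ≤ (f.support.erase b).card := Finset.card_le_card hsupp
          _ < f.support.card := by
              refine Finset.card_erase_lt_of_mem ?_
              rw [Finsupp.mem_support_iff]; exact hfb
          _ = n := hn
      have hgmem := ih g.support.card hcard g hg rfl
      have hzmem : (Finsupp.single b (1:ℤ) - Finsupp.single a 1) ∈ AddSubgroup.closure
          {z : α →₀ ℤ | ∃ (σ : G) (a : α), z = Finsupp.single (σ • a) 1 - Finsupp.single a 1} :=
        AddSubgroup.subset_closure ⟨σ₀, a, rfl⟩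
      have : f = g + f b • (Finsupp.single b 1 - Finsupp.single a 1) := by
        rw [hgdef, sub_add_cancel]
      rw [this]
      exact add_mem hgmem (zsmul_mem hzmem _)
    · -- all nonzero values of f on the orbit of a are at a itself: contradiction
      exfalso
      push_neg at hb
      have : ∑ σ : G, f (σ • a) = ∑ σ : G, (if σ • a = a then f a else 0) := by
        refine Finset.sum_congr rfl fun σ _ => ?_
        by_cases hσ : σ • a = a
        · rw [if_pos hσ, hσ]
        · rw [if_neg hσ, hb σ hσ]
      have h0 := h a
      rw [this, ← Finset.sum_filter, Finset.sum_const, nsmul_eq_mul] at h0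
      have hcard : (Finset.univ.filter (fun σ : G => σ • a = a)).card ≠ 0 := by
        refine Finset.card_ne_zero_of_mem (a := (1 : G)) ?_
        simp [one_smul]
      rcases mul_eq_zero.mp h0 with h' | h'
      · exact hcard (by exact_mod_cast h')
      · exact hfa h'

open TateNF in
theorem Hminus1_X_vanishes
    (K L : Type) [Field K] [Field L] [NumberField K] [NumberField L]
    [Algebra K L] [IsGalois K L] [FiniteDimensional K L]
    (S : Finset (TateNF.PlaceOf K))
    -- `S` contains all the infinite places of `K`
    (hSinf : ∀ w : NumberField.InfinitePlace K, Sum.inl w ∈ S)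
    -- `S` contains all the finite places of `K` that ramify in `L/K`
    (hSram : ∀ (p : IsDedekindDomain.HeightOneSpectrum (NumberField.RingOfIntegers K))
      (P : IsDedekindDomain.HeightOneSpectrum (NumberField.RingOfIntegers L)),
      P.asIdeal.comap (algebraMap (NumberField.RingOfIntegers K) (NumberField.RingOfIntegers L))
          = p.asIdeal →
      1 < Ideal.ramificationIdx'
          p.asIdeal P.asIdeal →
      Sum.inr p ∈ S)
    -- for each `p ∈ S`, a fixed choice of a place `p(L)` of `L` above `p`
    (PL : ∀ p ∈ S, ↥(TateNF.SL K L S))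
    (hPL : ∀ (p : TateNF.PlaceOf K) (hp : p ∈ S), TateNF.LiesAbove K L (PL p hp : TateNF.PlaceOf L) p)
    -- a finite place `p0 ∈ S` whose decomposition group is all of `G`
    (p0 : TateNF.PlaceOf K) (hp0S : p0 ∈ S)
    (hp0fin : ∃ v : IsDedekindDomain.HeightOneSpectrum (NumberField.RingOfIntegers K),
      p0 = Sum.inr v)
    (hp0full : TateNF.DecompGrp K L S (PL p0 hp0S) = ⊤)
    :
    ∀ x : Y K L S, x ∈ Xsub K L S → (∑ σ : L ≃ₐ[K] L, σ • x) = 0 →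
      x ∈ AddSubgroup.closure
        {z : Y K L S | ∃ (σ : L ≃ₐ[K] L) (y : Y K L S), y ∈ Xsub K L S ∧ z = σ • y - y} := by
  classical
  intro x hx hN
  -- Step 1: twisted sums vanish
  have hts : ∀ a : ↥(SL K L S), ∑ σ : L ≃ₐ[K] L, x (σ • a) = 0 := by
    intro a
    have h1 : ∀ σ : L ≃ₐ[K] L, (σ • x) a = x (σ⁻¹ • a) := by
      intro σ
      have : σ • x = Finsupp.mapDomain (fun p : ↥(SL K L S) => σ • p) x := rfl
      rw [this]
      have := Finsupp.mapDomain_apply (f := fun p : ↥(SL K L S) => σ • p)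
        (MulAction.injective σ) x (σ⁻¹ • a)
      rw [smul_inv_smul] at this
      exact this
    have h2 : ∑ σ : L ≃ₐ[K] L, x (σ⁻¹ • a) = 0 := by
      have := congrArg (fun f : Y K L S => f a) hN
      simpa [Finsupp.finset_sum_apply, h1] using this
    calc ∑ σ : L ≃ₐ[K] L, x (σ • a) = ∑ σ : L ≃ₐ[K] L, x (σ⁻¹ • a) :=
          Fintype.sum_equiv (Equiv.inv (L ≃ₐ[K] L)) _ _ fun σ => by rw [Equiv.inv_apply, inv_inv]
      _ = 0 := h2
  -- Step 2: apply the key lemma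
  have hclos := key_finsupp_lemma (G := L ≃ₐ[K] L) x hts
  -- Step 3: generators of the key lemma lie in the target subgroup
  refine AddSubgroup.closure_le (K := AddSubgroup.closure _) |>.mpr ?_ hclos
  rintro z ⟨σ, P, rfl⟩
  set P0 : ↥(SL K L S) := PL p0 hp0S with hP0
  have hP0fix : σ • P0 = P0 := by
    have hσ : σ ∈ DecompGrp K L S (PL p0 hp0S) := by rw [hp0full]; trivial
    have : σ • (P0 : PlaceOf L) = (P0 : PlaceOf L) := hσ
    exact Subtype.ext this
  have hy : (Finsupp.single P 1 - Finsupp.single P0 1 : Y K L S) ∈ Xsub K L S := by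
    rw [mem_Xsub, map_sub]
    simp [augY]
  refine AddSubgroup.subset_closure ⟨σ, Finsupp.single P 1 - Finsupp.single P0 1, hy, ?_⟩
  have hs1 : σ • (Finsupp.single P (1:ℤ)) = Finsupp.single (σ • P) 1 := by
    show Finsupp.mapDomain (fun p : ↥(SL K L S) => σ • p) (Finsupp.single P (1:ℤ)) = _
    rw [Finsupp.mapDomain_single]
  have hs2 : σ • (Finsupp.single P0 (1:ℤ)) = Finsupp.single P0 1 := by
    show Finsupp.mapDomain (fun p : ↥(SL K L S) => σ • p) (Finsupp.single P0 (1:ℤ)) = _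
    rw [Finsupp.mapDomain_single, hP0fix]
  rw [smul_sub, hs1, hs2]
  abel
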